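/- (Theorem 1(ii), precise form) Let M ≥ 0 and let T₁, …, T_k ⊆ {0, 1, …, M} be finite sets with indicator polynomials h_i = Σ_{t ∈ T_i} D^t ∈ F₂[D, D⁻¹]. Let π be a permutation of {1, …, k} with π ∘ π = id such that for every fixed point i of π the support set satisfies {M − t : t ∈ T_i} = T_i. Define z_i = D^M · invert(h_{π(i)}) for each i, and form the systematic row vectors X = (h₁, …, h_k, 1) and Z = (z₁, …, z_k, 1). Then X and Z are symplectically orthogonal: Σ_{j=1}^{k+1} (X_j · invert(Z_j) + Z_j · invert(X_j)) = 0 in F₂[D, D⁻¹]. -/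

import Mathlib

open LaurentPolynomial

private lemma lp_add_self (x : LaurentPolynomial (ZMod 2)) : x + x = 0 := by
  have h2 : (2 : LaurentPolynomial (ZMod 2)) = 0 := by
    have := map_ofNat (algebraMap (ZMod 2) (LaurentPolynomial (ZMod 2))) 2
    rw [show ((OfNat.ofNat 2 : ZMod 2)) = 0 by decide] at this
    simpa using this.symm
  rw [← two_mul, h2, zero_mul]

private lemma invert_reflected (M : ℕ) (S : Finset ℤ)
    (hS : S.image (fun t => (M : ℤ) - t) = S) :
    LaurentPolynomial.invert (∑ t ∈ S, (LaurentPolynomial.T t : LaurentPolynomial (ZMod 2)))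
      = LaurentPolynomial.T (-(M : ℤ)) * ∑ t ∈ S, LaurentPolynomial.T t := by
  rw [map_sum, Finset.mul_sum]
  simp only [invert_T, ← T_add]
  conv_rhs => rw [← hS, Finset.sum_image (by intro x _ y _ hxy; simp only at hxy; omega)]
  apply Finset.sum_congr rfl
  intro t _
  ring_nf

/-- Theorem 1(ii), precise form: let `T₁, …, T_k ⊆ {0, …, M}` with indicator
polynomials `h_i = Σ_{t ∈ T_i} D^t` over `F₂`, let `π` be an involutive permutation of
the indices such that every fixed point `i` of `π` has reflection-invariant support
`{M − t : t ∈ T_i} = T_i`, and set `z_i = D^M · invert(h_{π(i)})`. Then the systematic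
row vectors `X = (h₁, …, h_k, 1)` and `Z = (z₁, …, z_k, 1)` are symplectically
orthogonal: `Σ_j (X_j · invert(Z_j) + Z_j · invert(X_j)) = 0`. -/
theorem reflected_rows_symplectically_orthogonal (M : ℕ) (k : ℕ)
    (T : Fin k → Finset ℤ)
    (hsub : ∀ i, T i ⊆ Finset.Icc 0 (M : ℤ))
    (h : Fin k → LaurentPolynomial (ZMod 2))
    (hh : ∀ i, h i = ∑ t ∈ T i, LaurentPolynomial.T t)
    (π : Equiv.Perm (Fin k)) (hinv : ∀ i, π (π i) = i)
    (hfix : ∀ i, π i = i → (T i).image (fun t => (M : ℤ) - t) = T i)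
    (z : Fin k → LaurentPolynomial (ZMod 2))
    (hz : ∀ i, z i = LaurentPolynomial.T (M : ℤ) * LaurentPolynomial.invert (h (π i)))
    (X Z : Fin (k + 1) → LaurentPolynomial (ZMod 2))
    (hX : X = Fin.snoc h 1) (hZ : Z = Fin.snoc z 1) :
    (∑ j, (X j * LaurentPolynomial.invert (Z j) +
        Z j * LaurentPolynomial.invert (X j))) = 0 := by
  subst hX hZ
  rw [Fin.sum_univ_castSucc]
  simp only [Fin.snoc_castSucc, Fin.snoc_last, map_one, one_mul]
  rw [lp_add_self, add_zero]
  set f : Fin k → LaurentPolynomial (ZMod 2) :=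
    fun i => h i * invert (z i) + z i * invert (h i) with hf
  -- key simplification of each term
  have hterm : ∀ i, f i =
      LaurentPolynomial.T (-(M : ℤ)) * (h i * h (π i))
        + LaurentPolynomial.T (M : ℤ) * (invert (h i) * invert (h (π i))) := by
    intro i
    rw [hf]
    simp only [hz, map_mul, invert_T, LaurentPolynomial.involutive_invert (h (π i))]
    ring
  apply Finset.sum_ninvolution π
  · intro i
    show f i + f (π i) = 0
    have : f (π i) = f i := by rw [hterm, hterm, hinv]; ring
    rw [this, lp_add_self]
  · intro i hne
    by_contra hpi
    apply hne
    show f i = 0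
    have hinv_h : invert (h i) = LaurentPolynomial.T (-(M : ℤ)) * h i := by
      rw [hh]; exact invert_reflected M (T i) (hfix i hpi)
    rw [hterm, hpi, hinv_h]
    have hTT : LaurentPolynomial.T ((M : ℤ))
        * (LaurentPolynomial.T (-(M : ℤ)) * h i * (LaurentPolynomial.T (-(M : ℤ)) * h i))
        = LaurentPolynomial.T (-(M : ℤ)) * (h i * h i) := by
      rw [show LaurentPolynomial.T ((M:ℤ)) * (LaurentPolynomial.T (-(M:ℤ)) * h i *
          (LaurentPolynomial.T (-(M:ℤ)) * h i))
        = (LaurentPolynomial.T ((M:ℤ)) * LaurentPolynomial.T (-(M:ℤ)))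
          * (LaurentPolynomial.T (-(M:ℤ)) * (h i * h i)) by ring,
        ← T_add, add_neg_cancel, T_zero, one_mul]
    rw [hTT, lp_add_self]
  · intro i; exact Finset.mem_univ _
  · exact hinv
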